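/- Let c > 0 and h_T > 0, let C : ℝ₊ → ℝ₊ be any function, and let H_1, ..., H_m be reals with C(H_m) > C(h_T). Define for 2 ≤ k ≤ m: u_k := Σ_{i=k}^{m} (min(C(h_T) - c, C(H_{i-1})) - C(H_i)). Then max over k in {2,...,m} of u_k ≤ -c. -/

import Mathlib

lemma stmt5_aux (a : ℝ) (x : ℕ → ℝ) (k : ℕ) :
    ∀ m, k ≤ m →
      (∑ i ∈ Finset.Icc k m, (min a (x (i - 1)) - x i)) ≤ a - x m := by
  intro m
  induction m with
  | zero =>
      intro hk
      interval_cases k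
      simp [min_le_left]
  | succ n ih =>
      intro hk
      rcases Nat.lt_or_ge k (n + 1) with h | h
      · have hkn : k ≤ n := Nat.lt_succ_iff.mp h
        rw [show Finset.Icc k (n + 1) = insert (n + 1) (Finset.Icc k n) by
              ext j; simp [Nat.lt_succ_iff]; omega,
            Finset.sum_insert (by simp)]
        have h1 := ih hkn
        have h2 : min a (x (n + 1 - 1)) - x (n + 1) ≤ x n - x (n + 1) := by
          simp [min_le_right]
        linarith
      · have : k = n + 1 := le_antisymm hk h
        subst this
        simp [min_le_left]

/-- Deterministic chain of inequalities in the BRQ achievability proof: if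
`C(H m) > C(h_T)`, then for every `k ∈ {2,…,m}` the unresolved information
`u_k = ∑_{i=k}^m (min(C(h_T)-c, C(H_{i-1})) - C(H_i))` is at most `-c`. -/
theorem stmt5 (c hT : ℝ) (hc : 0 < c) (hhT : 0 < hT)
    (C : ℝ → ℝ) (hCnonneg : ∀ x, 0 ≤ C x)
    (m : ℕ) (H : ℕ → ℝ) (hHm : C hT < C (H m)) :
    ∀ k, 2 ≤ k → k ≤ m →
      (∑ i ∈ Finset.Icc k m, (min (C hT - c) (C (H (i - 1))) - C (H i))) ≤ -c := by
  intro k hk2 hkm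
  have := stmt5_aux (C hT - c) (fun i => C (H i)) k m hkm
  linarith
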